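/- (Domain indices maximize data and label orthogonal information, Appendix Lemma.) Let X, Y, U, B, Z be nonempty finite types with an injection ι : X → Z, and let p be a pmf on X × Y with marginal p_X. For a kernel κ from X to U × B × Z, define the pmf π_κ on X × Y × U × B × Z by π_κ(x,y,u,β,z) = p(x,y)·κ(u,β,z|x), with mutual informations computed from the corresponding marginals of π_κ. Then the supremum, over all kernels κ from X to U × B × Z satisfying the independence constraint I_{π_κ}(B;Z) = 0, of I_{π_κ}(X;(U,B,Z)) + I_{π_κ}(Y;Z) equals H(p_X) + I_p(X;Y), and this supremum is attained; consequently, any constrained maximizer κ satisfies both I_{π_κ}(X;(U,B,Z)) = H(p_X) and I_{π_κ}(Y;Z) = I_p(X;Y). -/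

import Mathlib

/-- Mutual information of a joint `r` on `A × C`, with marginals computed as sums:
`I_r(A;C) = ∑ a c, r a c * log (r a c / (r_A a * r_C c))`. -/
noncomputable def MI2 {A C : Type*} [Fintype A] [Fintype C] (r : A → C → ℝ) : ℝ :=
  ∑ a, ∑ c, r a c * Real.log (r a c / ((∑ c', r a c') * (∑ a', r a' c)))

/-- The joint pmf `π_κ x y u β z = p x y * κ u β z|x` induced by a pmf `p` on
`X × Y` and a kernel `κ` from `X` to `U × B × Z`. -/
noncomputable def piDist {X Y U B Z : Type*}
    (p : X → Y → ℝ) (κ : X → U → B → Z → ℝ) : X → Y → U → B → Z → ℝ :=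
  fun x y u β z => p x y * κ x u β z

/-- `(B,Z)`-marginal of a joint on `X × Y × U × B × Z`. -/
noncomputable def margBZ {X Y U B Z : Type*} [Fintype X] [Fintype Y] [Fintype U]
    (π : X → Y → U → B → Z → ℝ) : B → Z → ℝ :=
  fun β z => ∑ x, ∑ y, ∑ u, π x y u β z

/-- `(X,(U,B,Z))`-marginal of a joint on `X × Y × U × B × Z`. -/
noncomputable def margXUBZ {X Y U B Z : Type*} [Fintype Y]
    (π : X → Y → U → B → Z → ℝ) : X → (U × B × Z) → ℝ :=
  fun x w => ∑ y, π x y w.1 w.2.1 w.2.2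

/-- `(Y,Z)`-marginal of a joint on `X × Y × U × B × Z`. -/
noncomputable def margYZ {X Y U B Z : Type*} [Fintype X] [Fintype U] [Fintype B]
    (π : X → Y → U → B → Z → ℝ) : Y → Z → ℝ :=
  fun y z => ∑ x, ∑ u, ∑ β, π x y u β z

open Finset

/-- Pointwise Gibbs-type bound: `a - b ≤ a log (a / b)`. -/
lemma sub_le_mul_log_div (a b : ℝ) (ha : 0 ≤ a) (hb : 0 ≤ b) (hab : 0 < a → 0 < b) :
    a - b ≤ a * Real.log (a / b) := by
  rcases eq_or_lt_of_le ha with h | h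
  · rw [← h]; simpa using hb
  · have hbp := hab h
    have h1 : Real.log (b / a) ≤ b / a - 1 := Real.log_le_sub_one_of_pos (by positivity)
    have h2 : Real.log (a / b) = - Real.log (b / a) := by rw [← Real.log_inv, inv_div]
    have h3 : a * (b / a) = b := by field_simp
    nlinarith

/-- Mutual information is at most the entropy of the first marginal. -/
lemma MI2_le_neg_entropy {X W : Type*} [Fintype X] [Fintype W]
    (q : X → ℝ) (κ : X → W → ℝ) (hq : ∀ x, 0 ≤ q x)
    (hκ0 : ∀ x w, 0 ≤ κ x w) (hκ1 : ∀ x, ∑ w, κ x w = 1) :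
    MI2 (fun x w => q x * κ x w) ≤ -∑ x, q x * Real.log (q x) := by
  have key : ∀ x w, (q x * κ x w) * Real.log ((q x * κ x w) /
      ((∑ w', q x * κ x w') * (∑ x', q x' * κ x' w)))
      ≤ -(q x * κ x w * Real.log (q x)) := by
    intro x w
    rcases eq_or_lt_of_le (mul_nonneg (hq x) (hκ0 x w)) with h | h
    · rw [← h]; simp
    · have hqx : 0 < q x := lt_of_le_of_ne (hq x)
        (fun e => by rw [← e, zero_mul] at h; exact lt_irrefl 0 h)
      have hκx : 0 < κ x w := lt_of_le_of_ne (hκ0 x w)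
        (fun e => by rw [← e, mul_zero] at h; exact lt_irrefl 0 h)
      have h1 : ∑ w', q x * κ x w' = q x := by rw [← Finset.mul_sum, hκ1, mul_one]
      have hW : 0 < ∑ x', q x' * κ x' w :=
        lt_of_lt_of_le h (Finset.single_le_sum
          (fun x' _ => mul_nonneg (hq x') (hκ0 x' w)) (mem_univ x))
      have hle : q x * κ x w ≤ ∑ x', q x' * κ x' w :=
        Finset.single_le_sum (fun x' _ => mul_nonneg (hq x') (hκ0 x' w)) (mem_univ x)
      rw [h1, Real.log_div (ne_of_gt h) (by positivity),
        Real.log_mul (ne_of_gt hqx) (ne_of_gt hW)]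
      have hlog : Real.log (q x * κ x w) ≤ Real.log (∑ x', q x' * κ x' w) :=
        Real.log_le_log h hle
      nlinarith
  calc MI2 (fun x w => q x * κ x w)
      ≤ ∑ x, ∑ w, -(q x * κ x w * Real.log (q x)) := by
        unfold MI2
        exact Finset.sum_le_sum fun x _ => Finset.sum_le_sum fun w _ => key x w
    _ = -∑ x, q x * Real.log (q x) := by
        simp only [Finset.sum_neg_distrib]
        congr 1
        refine Finset.sum_congr rfl fun x _ => ?_
        rw [← Finset.sum_mul, ← Finset.mul_sum, hκ1, mul_one]

/-- Data-processing inequality for the Markov chain `Y — X — Z`. -/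
lemma MI2_dpi_aux {X Y Z : Type*} [Fintype X] [Fintype Y] [Fintype Z]
    (p : X → Y → ℝ) (κ : X → Z → ℝ) (pX : X → ℝ) (pY : Y → ℝ) (q : Y → Z → ℝ) (qZ : Z → ℝ)
    (hp0 : ∀ x y, 0 ≤ p x y) (hκ0 : ∀ x z, 0 ≤ κ x z)
    (hκ1 : ∀ x, ∑ z, κ x z = 1) (hp1 : ∑ x, ∑ y, p x y = 1)
    (hpX : ∀ x, (∑ y, p x y) = pX x)
    (hpY : ∀ y, (∑ x, p x y) = pY y)
    (hqd : ∀ y z, (∑ x, p x y * κ x z) = q y z)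
    (hqZ : ∀ z, (∑ x, pX x * κ x z) = qZ z) :
    MI2 q ≤ MI2 p := by
  have hpX0 : ∀ x, 0 ≤ pX x := fun x => (hpX x) ▸ Finset.sum_nonneg fun y _ => hp0 x y
  have hpY0 : ∀ y, 0 ≤ pY y := fun y => (hpY y) ▸ Finset.sum_nonneg fun x _ => hp0 x y
  have hq0 : ∀ y z, 0 ≤ q y z :=
    fun y z => (hqd y z) ▸ Finset.sum_nonneg fun x _ => mul_nonneg (hp0 x y) (hκ0 x z)
  have hqZ0 : ∀ z, 0 ≤ qZ z :=
    fun z => (hqZ z) ▸ Finset.sum_nonneg fun x _ => mul_nonneg (hpX0 x) (hκ0 x z)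
  have hqY : ∀ y, ∑ z, q y z = pY y := by
    intro y
    rw [← hpY y]
    rw [show (∑ z, q y z) = ∑ z, ∑ x, p x y * κ x z from
      Finset.sum_congr rfl fun z _ => (hqd y z).symm]
    rw [Finset.sum_comm]
    exact Finset.sum_congr rfl fun x _ => by rw [← Finset.mul_sum, hκ1, mul_one]
  have hqZs : ∀ z, ∑ y, q y z = qZ z := by
    intro z
    rw [← hqZ z]
    rw [show (∑ y, q y z) = ∑ y, ∑ x, p x y * κ x z from
      Finset.sum_congr rfl fun y _ => (hqd y z).symm]
    rw [Finset.sum_comm]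
    exact Finset.sum_congr rfl fun x _ => by rw [← Finset.sum_mul, hpX]
  have hqZ1 : ∑ z, qZ z = 1 := by
    rw [show (∑ z, qZ z) = ∑ z, ∑ x, pX x * κ x z from
      Finset.sum_congr rfl fun z _ => (hqZ z).symm, Finset.sum_comm]
    rw [show (∑ x, ∑ z, pX x * κ x z) = ∑ x, pX x from
      Finset.sum_congr rfl fun x _ => by rw [← Finset.mul_sum, hκ1, mul_one]]
    rw [← hp1]
    exact Finset.sum_congr rfl fun x _ => (hpX x).symm
  have e2 : MI2 q = ∑ x, ∑ y, ∑ z, (p x y * κ x z) * Real.log (q y z / (pY y * qZ z)) := by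
    unfold MI2
    rw [show (∑ y, ∑ z, q y z * Real.log (q y z / ((∑ c', q y c') * (∑ a', q a' z))))
        = ∑ y, ∑ z, ∑ x, (p x y * κ x z) * Real.log (q y z / (pY y * qZ z)) from
      Finset.sum_congr rfl fun y _ => Finset.sum_congr rfl fun z _ => by
        rw [hqY y, hqZs z, ← Finset.sum_mul, hqd]]
    exact (Finset.sum_congr rfl fun y _ => Finset.sum_comm).trans Finset.sum_comm
  have e1 : MI2 p = ∑ x, ∑ y, ∑ z, (p x y * κ x z) * Real.log (p x y / (pX x * pY y)) := by
    unfold MI2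
    refine Finset.sum_congr rfl fun x _ => Finset.sum_congr rfl fun y _ => ?_
    rw [hpX x, hpY y, ← Finset.sum_mul, ← Finset.mul_sum, hκ1, mul_one]
  have step3 : ∀ x y z,
      (p x y * κ x z) * Real.log (p x y / (pX x * pY y))
        - (p x y * κ x z) * Real.log (q y z / (pY y * qZ z))
      = (p x y * κ x z) * Real.log ((p x y * κ x z) / (q y z * (pX x * κ x z) / qZ z)) := by
    intro x y z
    by_cases hp : p x y = 0
    · simp [hp]
    by_cases hκ : κ x z = 0
    · simp [hκ]
    have hppos : 0 < p x y := lt_of_le_of_ne (hp0 x y) (Ne.symm hp)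
    have hκpos : 0 < κ x z := lt_of_le_of_ne (hκ0 x z) (Ne.symm hκ)
    have hpXpos : 0 < pX x := lt_of_lt_of_le hppos
      ((hpX x) ▸ Finset.single_le_sum (fun y' _ => hp0 x y') (mem_univ y))
    have hpYpos : 0 < pY y := lt_of_lt_of_le hppos
      ((hpY y) ▸ Finset.single_le_sum (fun x' _ => hp0 x' y) (mem_univ x))
    have hqpos : 0 < q y z := lt_of_lt_of_le (mul_pos hppos hκpos)
      ((hqd y z) ▸ Finset.single_le_sum
        (fun x' _ => mul_nonneg (hp0 x' y) (hκ0 x' z)) (mem_univ x))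
    have hqZpos : 0 < qZ z := lt_of_lt_of_le (mul_pos hpXpos hκpos)
      ((hqZ z) ▸ Finset.single_le_sum
        (fun x' _ => mul_nonneg (hpX0 x') (hκ0 x' z)) (mem_univ x))
    have hts : (p x y * κ x z) / (q y z * (pX x * κ x z) / qZ z)
        = (p x y * qZ z) / (pX x * q y z) := by
      field_simp
    rw [hts, Real.log_div (by positivity) (by positivity),
      Real.log_div (by positivity) (by positivity),
      Real.log_div (by positivity) (by positivity),
      Real.log_mul (by positivity) (by positivity),
      Real.log_mul (by positivity) (by positivity),
      Real.log_mul (by positivity) (by positivity),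
      Real.log_mul (by positivity) (by positivity)]
    ring
  have hsumt : ∑ x, ∑ y, ∑ z, p x y * κ x z = 1 := by
    rw [← hp1]
    refine Finset.sum_congr rfl fun x _ => Finset.sum_congr rfl fun y _ => ?_
    rw [← Finset.mul_sum, hκ1, mul_one]
  have hsums : ∑ x, ∑ y, ∑ z, q y z * (pX x * κ x z) / qZ z ≤ 1 := by
    have reorder : (∑ x, ∑ y, ∑ z, q y z * (pX x * κ x z) / qZ z)
        = ∑ z, ∑ x, ∑ y, q y z * (pX x * κ x z) / qZ z := by
      rw [show (∑ x, ∑ y, ∑ z, q y z * (pX x * κ x z) / qZ z)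
          = ∑ x, ∑ z, ∑ y, q y z * (pX x * κ x z) / qZ z from
        Finset.sum_congr rfl fun x _ => Finset.sum_comm]
      exact Finset.sum_comm
    rw [reorder, ← hqZ1]
    refine Finset.sum_le_sum fun z _ => ?_
    have inner : ∀ x, (∑ y, q y z * (pX x * κ x z) / qZ z)
        = qZ z * (pX x * κ x z) / qZ z := by
      intro x
      rw [← Finset.sum_div, ← Finset.sum_mul, hqZs z]
    rw [Finset.sum_congr rfl fun x _ => inner x]
    by_cases hz : qZ z = 0
    · simp [hz]
    · rw [show (∑ x, qZ z * (pX x * κ x z) / qZ z) = ∑ x, pX x * κ x z from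
        Finset.sum_congr rfl fun x _ => by field_simp]
      rw [hqZ z]
  have hdiff : MI2 p - MI2 q
      = ∑ x, ∑ y, ∑ z, (p x y * κ x z) *
          Real.log ((p x y * κ x z) / (q y z * (pX x * κ x z) / qZ z)) := by
    rw [e1, e2, ← Finset.sum_sub_distrib]
    refine Finset.sum_congr rfl fun x _ => ?_
    rw [← Finset.sum_sub_distrib]
    refine Finset.sum_congr rfl fun y _ => ?_
    rw [← Finset.sum_sub_distrib]
    exact Finset.sum_congr rfl fun z _ => step3 x y z
  have hpos : 0 ≤ MI2 p - MI2 q := by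
    rw [hdiff]
    have key : ∀ x y z, p x y * κ x z - q y z * (pX x * κ x z) / qZ z
        ≤ (p x y * κ x z) * Real.log ((p x y * κ x z) / (q y z * (pX x * κ x z) / qZ z)) := by
      intro x y z
      refine sub_le_mul_log_div _ _ (mul_nonneg (hp0 x y) (hκ0 x z))
        (div_nonneg (mul_nonneg (hq0 y z) (mul_nonneg (hpX0 x) (hκ0 x z))) (hqZ0 z)) ?_
      intro ht
      have hppos : 0 < p x y := by
        rcases mul_pos_iff.mp ht with ⟨h1, _⟩ | ⟨h1, _⟩
        · exact h1
        · exact absurd (hp0 x y) (not_le.mpr h1)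
      have hκpos : 0 < κ x z := by
        rcases mul_pos_iff.mp ht with ⟨_, h1⟩ | ⟨_, h1⟩
        · exact h1
        · exact absurd (hκ0 x z) (not_le.mpr h1)
      have hpXpos : 0 < pX x := lt_of_lt_of_le hppos
        ((hpX x) ▸ Finset.single_le_sum (fun y' _ => hp0 x y') (mem_univ y))
      have hqpos : 0 < q y z := lt_of_lt_of_le (mul_pos hppos hκpos)
        ((hqd y z) ▸ Finset.single_le_sum
          (fun x' _ => mul_nonneg (hp0 x' y) (hκ0 x' z)) (mem_univ x))
      have hqZpos : 0 < qZ z := lt_of_lt_of_le (mul_pos hpXpos hκpos)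
        ((hqZ z) ▸ Finset.single_le_sum
          (fun x' _ => mul_nonneg (hpX0 x') (hκ0 x' z)) (mem_univ x))
      positivity
    calc (0:ℝ) = 1 - 1 := by norm_num
      _ ≤ (∑ x, ∑ y, ∑ z, p x y * κ x z)
            - ∑ x, ∑ y, ∑ z, q y z * (pX x * κ x z) / qZ z := by
          rw [hsumt]; linarith
      _ = ∑ x, ∑ y, ∑ z, (p x y * κ x z - q y z * (pX x * κ x z) / qZ z) := by
          rw [← Finset.sum_sub_distrib]
          refine Finset.sum_congr rfl fun x _ => ?_
          rw [← Finset.sum_sub_distrib]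
          exact Finset.sum_congr rfl fun y _ => (Finset.sum_sub_distrib _ _).symm
      _ ≤ _ := Finset.sum_le_sum fun x _ => Finset.sum_le_sum fun y _ =>
          Finset.sum_le_sum fun z _ => key x y z
  linarith

/-- Mutual information of a product distribution vanishes. -/
lemma MI2_prod {A C : Type*} [Fintype A] [Fintype C] (f : A → ℝ) (g : C → ℝ)
    (hf : ∑ a, f a = 1) (hg : ∑ c, g c = 1) :
    MI2 (fun a c => f a * g c) = 0 := by
  unfold MI2
  refine Finset.sum_eq_zero fun a _ => Finset.sum_eq_zero fun c _ => ?_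
  show (f a * g c) * Real.log ((f a * g c) / ((∑ c', f a * g c') * (∑ a', f a' * g c))) = 0
  have h1 : ∑ c', f a * g c' = f a := by rw [← Finset.mul_sum, hg, mul_one]
  have h2 : ∑ a', f a' * g c = g c := by rw [← Finset.sum_mul, hf, one_mul]
  rw [h1, h2]
  rcases eq_or_ne (f a * g c) 0 with h | h
  · rw [h, zero_mul]
  · rw [div_self h, Real.log_one, mul_zero]

/-- Mutual information of a deterministic injective coupling is the entropy. -/
lemma MI2_deterministic {A C : Type*} [Fintype A] [Fintype C] [DecidableEq C]
    (f : A → ℝ) (g : A → C) (hg : Function.Injective g) :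
    MI2 (fun a c => if c = g a then f a else 0) = -∑ a, f a * Real.log (f a) := by
  unfold MI2
  rw [← Finset.sum_neg_distrib]
  refine Finset.sum_congr rfl fun a _ => ?_
  show (∑ c, (if c = g a then f a else 0) *
      Real.log ((if c = g a then f a else 0) /
        ((∑ c', if c' = g a then f a else 0) * (∑ a', if (c : C) = g a' then f a' else 0))))
    = -(f a * Real.log (f a))
  rw [Finset.sum_eq_single (g a)]
  · have h1 : ∑ c', (if c' = g a then f a else 0) = f a := by
      simp [Finset.sum_ite_eq']
    have h2 : ∑ a', (if g a = g a' then f a' else 0) = f a := by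
      rw [Finset.sum_eq_single a (fun a' _ hne => if_neg (fun h => hne (hg h.symm)))
        (fun h => absurd (mem_univ a) h), if_pos rfl]
    rw [if_pos rfl, h1, h2]
    rcases eq_or_ne (f a) 0 with h | h
    · rw [h]; simp
    · rw [show f a / (f a * f a) = (f a)⁻¹ by field_simp, Real.log_inv]; ring
  · intro c _ hc
    rw [if_neg hc, zero_mul]
  · intro h
    exact absurd (mem_univ (g a)) h

/-- Relabelling the second coordinate along an injection preserves mutual information. -/
lemma MI2_inj {X Y Z : Type*} [Fintype X] [Fintype Y] [Fintype Z] [DecidableEq Z]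
    (p : X → Y → ℝ) (ι : X → Z) (hι : Function.Injective ι) :
    MI2 (fun y z => ∑ x, if z = ι x then p x y else 0) = MI2 p := by
  unfold MI2
  have hm1 : ∀ y, (∑ z, ∑ x, if z = ι x then p x y else 0) = ∑ x', p x' y := by
    intro y
    rw [Finset.sum_comm]
    exact Finset.sum_congr rfl fun x _ => by simp [Finset.sum_ite_eq']
  have hm2 : ∀ z, (∑ y', ∑ x, if z = ι x then p x y' else 0)
      = ∑ x, if z = ι x then (∑ y', p x y') else 0 := by
    intro z
    rw [Finset.sum_comm]
    refine Finset.sum_congr rfl fun x _ => ?_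
    split <;> simp
  have hcol : ∀ (c : X → ℝ) (x : X), (∑ x', if ι x = ι x' then c x' else 0) = c x := by
    intro c x
    rw [Finset.sum_eq_single x (fun x' _ hne => if_neg (fun h => hne (hι h.symm)))
      (fun h => absurd (mem_univ x) h), if_pos rfl]
  have main : ∀ y, (∑ z, (∑ x, if z = ι x then p x y else 0) *
        Real.log ((∑ x, if z = ι x then p x y else 0) /
          ((∑ z', ∑ x, if z' = ι x then p x y else 0) *
           (∑ y', ∑ x, if z = ι x then p x y' else 0))))
      = ∑ x, p x y * Real.log (p x y / ((∑ x', p x' y) * (∑ y', p x y'))) := by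
    intro y
    calc (∑ z, (∑ x, if z = ι x then p x y else 0) *
        Real.log ((∑ x, if z = ι x then p x y else 0) /
          ((∑ z', ∑ x, if z' = ι x then p x y else 0) *
           (∑ y', ∑ x, if z = ι x then p x y' else 0))))
        = ∑ z ∈ Finset.image ι univ, (∑ x, if z = ι x then p x y else 0) *
          Real.log ((∑ x, if z = ι x then p x y else 0) /
            ((∑ z', ∑ x, if z' = ι x then p x y else 0) *
             (∑ y', ∑ x, if z = ι x then p x y' else 0))) := by
          refine (Finset.sum_subset (Finset.subset_univ _) fun z _ hz => ?_).symm
          have h0 : (∑ x, if z = ι x then p x y else 0) = 0 :=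
            Finset.sum_eq_zero fun x _ => if_neg fun h =>
              hz (Finset.mem_image.mpr ⟨x, mem_univ x, h.symm⟩)
          rw [h0, zero_mul]
      _ = ∑ x, (∑ x', if ι x = ι x' then p x' y else 0) *
          Real.log ((∑ x', if ι x = ι x' then p x' y else 0) /
            ((∑ z', ∑ x', if z' = ι x' then p x' y else 0) *
             (∑ y', ∑ x', if ι x = ι x' then p x' y' else 0))) :=
          Finset.sum_image (fun x _ x' _ h => hι h)
      _ = ∑ x, p x y * Real.log (p x y / ((∑ x', p x' y) * (∑ y', p x y'))) := by
          refine Finset.sum_congr rfl fun x _ => ?_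
          rw [hcol (fun x' => p x' y) x, hm1 y, hm2 (ι x), hcol (fun x' => ∑ y', p x' y') x]
  calc (∑ y, ∑ z, (∑ x, if z = ι x then p x y else 0) *
        Real.log ((∑ x, if z = ι x then p x y else 0) /
          ((∑ z', ∑ x, if z' = ι x then p x y else 0) *
           (∑ y', ∑ x, if z = ι x then p x y' else 0))))
      = ∑ y, ∑ x, p x y * Real.log (p x y / ((∑ x', p x' y) * (∑ y', p x y'))) :=
        Finset.sum_congr rfl fun y _ => main y
    _ = ∑ x, ∑ y, p x y * Real.log (p x y / ((∑ y', p x y') * (∑ x', p x' y))) := by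
        rw [Finset.sum_comm]
        exact Finset.sum_congr rfl fun x _ => Finset.sum_congr rfl fun y _ => by
          rw [mul_comm (∑ x', p x' y)]

set_option maxHeartbeats 2000000 in
/-- **Domain indices maximize data and label orthogonal information
(Appendix Lemma).**  Over kernels `κ` from `X` to `U × B × Z` satisfying the
independence constraint `I_{π_κ}(B;Z) = 0`, the supremum of
`I_{π_κ}(X;(U,B,Z)) + I_{π_κ}(Y;Z)` equals `H(p_X) + I_p(X;Y)` and is attained;
moreover any constrained maximizer `κ` satisfies both
`I_{π_κ}(X;(U,B,Z)) = H(p_X)` and `I_{π_κ}(Y;Z) = I_p(X;Y)`. -/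
theorem domain_index_maximizes_orthogonal_information {X Y U B Z : Type*}
    [Fintype X] [Fintype Y] [Fintype U] [Fintype B] [Fintype Z]
    [Nonempty X] [Nonempty Y] [Nonempty U] [Nonempty B] [Nonempty Z]
    (ι : X → Z) (hι : Function.Injective ι)
    (p : X → Y → ℝ) (hp0 : ∀ x y, 0 ≤ p x y) (hp1 : ∑ x, ∑ y, p x y = 1) :
    IsGreatest
      {v : ℝ | ∃ κ : X → U → B → Z → ℝ, (∀ x u β z, 0 ≤ κ x u β z) ∧
        (∀ x, ∑ u, ∑ β, ∑ z, κ x u β z = 1) ∧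
        MI2 (margBZ (piDist p κ)) = 0 ∧
        v = MI2 (margXUBZ (piDist p κ)) + MI2 (margYZ (piDist p κ))}
      ((-∑ x, (∑ y, p x y) * Real.log (∑ y, p x y)) + MI2 p)
    ∧ ∀ κ : X → U → B → Z → ℝ, (∀ x u β z, 0 ≤ κ x u β z) →
        (∀ x, ∑ u, ∑ β, ∑ z, κ x u β z = 1) →
        MI2 (margBZ (piDist p κ)) = 0 →
        MI2 (margXUBZ (piDist p κ)) + MI2 (margYZ (piDist p κ))
          = (-∑ x, (∑ y, p x y) * Real.log (∑ y, p x y)) + MI2 p →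
        MI2 (margXUBZ (piDist p κ)) = -∑ x, (∑ y, p x y) * Real.log (∑ y, p x y)
          ∧ MI2 (margYZ (piDist p κ)) = MI2 p := by
  classical
  obtain ⟨u0⟩ := ‹Nonempty U›
  obtain ⟨β0⟩ := ‹Nonempty B›
  -- general upper bounds for any kernel
  have bound1 : ∀ κ : X → U → B → Z → ℝ, (∀ x u β z, 0 ≤ κ x u β z) →
      (∀ x, ∑ u, ∑ β, ∑ z, κ x u β z = 1) →
      MI2 (margXUBZ (piDist p κ)) ≤ -∑ x, (∑ y, p x y) * Real.log (∑ y, p x y) := by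
    intro κ h0 h1
    have hrw : margXUBZ (piDist p κ) = fun x (w : U × B × Z) =>
        (∑ y, p x y) * κ x w.1 w.2.1 w.2.2 := by
      funext x w
      show (∑ y, p x y * κ x w.1 w.2.1 w.2.2) = _
      rw [← Finset.sum_mul]
    rw [hrw]
    refine MI2_le_neg_entropy (fun x => ∑ y, p x y)
      (fun x (w : U × B × Z) => κ x w.1 w.2.1 w.2.2)
      (fun x => Finset.sum_nonneg fun y _ => hp0 x y)
      (fun x (w : U × B × Z) => h0 x w.1 w.2.1 w.2.2) ?_
    intro x
    rw [Fintype.sum_prod_type]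
    simp_rw [Fintype.sum_prod_type]
    exact h1 x
  have bound2 : ∀ κ : X → U → B → Z → ℝ, (∀ x u β z, 0 ≤ κ x u β z) →
      (∀ x, ∑ u, ∑ β, ∑ z, κ x u β z = 1) →
      MI2 (margYZ (piDist p κ)) ≤ MI2 p := by
    intro κ h0 h1
    have hrw : margYZ (piDist p κ) = fun y z =>
        ∑ x, p x y * (∑ u, ∑ β, κ x u β z) := by
      funext y z
      show (∑ x, ∑ u, ∑ β, p x y * κ x u β z) = _
      simp only [← Finset.mul_sum]
    rw [hrw]
    refine MI2_dpi_aux p (fun x z => ∑ u, ∑ β, κ x u β z)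
      (fun x => ∑ y, p x y) (fun y => ∑ x, p x y)
      (fun y z => ∑ x, p x y * (∑ u, ∑ β, κ x u β z))
      (fun z => ∑ x, (∑ y, p x y) * (∑ u, ∑ β, κ x u β z))
      hp0 (fun x z => Finset.sum_nonneg fun u _ => Finset.sum_nonneg fun β _ => h0 x u β z)
      ?_ hp1 (fun _ => rfl) (fun _ => rfl) (fun _ _ => rfl) (fun _ => rfl)
    intro x
    calc ∑ z, ∑ u, ∑ β, κ x u β z = ∑ u, ∑ z, ∑ β, κ x u β z := Finset.sum_comm
      _ = ∑ u, ∑ β, ∑ z, κ x u β z := Finset.sum_congr rfl fun u _ => Finset.sum_comm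
      _ = 1 := h1 x
  -- the optimal kernel
  set κ0 : X → U → B → Z → ℝ := fun x u β z => (if u = u0 then (1:ℝ) else 0) *
    ((if β = β0 then (1:ℝ) else 0) * (if z = ι x then (1:ℝ) else 0)) with hκ0def
  have hκ00 : ∀ x u β z, 0 ≤ κ0 x u β z := by
    intro x u β z
    simp only [hκ0def]
    positivity
  have hκ01 : ∀ x, ∑ u, ∑ β, ∑ z, κ0 x u β z = 1 := by
    intro x
    simp only [hκ0def]
    simp [← Finset.mul_sum, Finset.sum_ite_eq']
  have hA : MI2 (margXUBZ (piDist p κ0))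
      = -∑ x, (∑ y, p x y) * Real.log (∑ y, p x y) := by
    have hrw : margXUBZ (piDist p κ0) = fun x (w : U × B × Z) =>
        if w = (u0, β0, ι x) then (∑ y, p x y) else 0 := by
      funext x w
      obtain ⟨u, β, z⟩ := w
      show (∑ y, p x y * κ0 x u β z) = _
      have hite : κ0 x u β z = if ((u, β, z) : U × B × Z) = (u0, β0, ι x) then 1 else 0 := by
        by_cases h1 : u = u0 <;> by_cases h2 : β = β0 <;> by_cases h3 : z = ι x <;>
          simp [hκ0def, h1, h2, h3, Prod.ext_iff]
      rw [hite, ← Finset.sum_mul, mul_ite, mul_one, mul_zero]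
    rw [hrw]
    exact MI2_deterministic (fun x => ∑ y, p x y) (fun x => (u0, β0, ι x))
      (fun a b h => hι (congrArg (fun w => w.2.2) h))
  have hB : MI2 (margYZ (piDist p κ0)) = MI2 p := by
    have hrw : margYZ (piDist p κ0) = fun y z => ∑ x, if z = ι x then p x y else 0 := by
      funext y z
      show (∑ x, ∑ u, ∑ β, p x y * κ0 x u β z) = _
      refine Finset.sum_congr rfl fun x _ => ?_
      simp only [hκ0def, ← Finset.mul_sum]
      simp [Finset.sum_ite_eq', mul_ite]
    rw [hrw]
    exact MI2_inj p ι hι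
  have hC : MI2 (margBZ (piDist p κ0)) = 0 := by
    have hrw : margBZ (piDist p κ0) = fun β z =>
        (if β = β0 then (1:ℝ) else 0) * (∑ x, if z = ι x then (∑ y, p x y) else 0) := by
      funext β z
      show (∑ x, ∑ y, ∑ u, p x y * κ0 x u β z) = _
      rw [Finset.mul_sum]
      refine Finset.sum_congr rfl fun x _ => ?_
      simp only [hκ0def, ← Finset.mul_sum]
      simp [Finset.sum_ite_eq', mul_ite, Finset.sum_ite_irrel]
    rw [hrw]
    refine MI2_prod _ _ (by simp [Finset.sum_ite_eq']) ?_
    rw [Finset.sum_comm]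
    rw [show (∑ x, ∑ z, if z = ι x then (∑ y, p x y) else 0) = ∑ x, ∑ y, p x y from
      Finset.sum_congr rfl fun x _ => by simp [Finset.sum_ite_eq']]
    exact hp1
  constructor
  · constructor
    · exact ⟨κ0, hκ00, hκ01, hC, by rw [hA, hB]⟩
    · rintro v ⟨κ, h0, h1, -, hv⟩
      rw [hv]
      exact add_le_add (bound1 κ h0 h1) (bound2 κ h0 h1)
  · intro κ h0 h1 _ heq
    have b1 := bound1 κ h0 h1
    have b2 := bound2 κ h0 h1
    constructor <;> linarith
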